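/- The map χ ↦ deg_z⟨·, χ⟩ is a bijection between the lattice of cocharacters ℤ^n of the split torus (ℂ*)^n and the set of semiring homomorphisms from the semiring P of positive rational functions on (ℂ*)^n to the tropical semiring ℤ^t = (ℤ, max, +). -/

import Mathlib

open BigOperators

/-- The tropicalization of a polynomial: for a cocharacter `χ`, this is
`deg_z⟨f, χ⟩`, the top `z`-degree of `f` specialized at `X_i ↦ z^{χ i}`. -/
def tropPoly {n : ℕ} (f : MvPolynomial (Fin n) ℤ) (χ : Fin n → ℤ) : ℤ :=
  (f.support.sup fun d => ((∑ i, (d i : ℤ) * χ i : ℤ) : WithBot ℤ)).unbotD 0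

/-- A polynomial is positive if it is nonzero and all its coefficients are nonnegative. -/
def IsPosPoly {n : ℕ} (f : MvPolynomial (Fin n) ℤ) : Prop :=
  f ≠ 0 ∧ ∀ d, 0 ≤ f.coeff d

namespace TropAux
open MvPolynomial


variable {n : ℕ}

def tdeg (χ : Fin n → ℤ) (d : Fin n →₀ ℕ) : ℤ := ∑ i, (d i : ℤ) * χ i

lemma tdeg_add (χ : Fin n → ℤ) (a b : Fin n →₀ ℕ) :
    tdeg χ (a + b) = tdeg χ a + tdeg χ b := by
  unfold tdeg
  rw [← Finset.sum_add_distrib]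
  refine Finset.sum_congr rfl fun i _ => ?_
  simp [Finsupp.add_apply]
  ring

lemma tropPoly_eq_sup' (f : MvPolynomial (Fin n) ℤ) (χ : Fin n → ℤ) (h : f ≠ 0) :
    tropPoly f χ = f.support.sup' (support_nonempty.mpr h) (tdeg χ) := by
  unfold tropPoly
  rw [show (fun d => ((∑ i, (d i : ℤ) * χ i : ℤ) : WithBot ℤ)) =
      (WithBot.some ∘ tdeg χ) from rfl, ← Finset.coe_sup' (support_nonempty.mpr h)]
  exact WithBot.unbotD_coe _ _

lemma le_trop {f : MvPolynomial (Fin n) ℤ} (χ : Fin n → ℤ) (hf : f ≠ 0)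
    {d : Fin n →₀ ℕ} (hd : d ∈ f.support) : tdeg χ d ≤ tropPoly f χ := by
  rw [tropPoly_eq_sup' f χ hf]
  exact Finset.le_sup' _ hd

lemma pos_support_add {f g : MvPolynomial (Fin n) ℤ} (hf : IsPosPoly f) (hg : IsPosPoly g) :
    (f + g).support = f.support ∪ g.support := by
  ext d
  simp only [MvPolynomial.mem_support_iff, Finset.mem_union, MvPolynomial.coeff_add]
  constructor
  · intro h
    by_contra hc
    push_neg at hc
    simp [hc.1, hc.2] at h
  · intro h hc
    have h1 := hf.2 d
    have h2 := hg.2 d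
    rcases h with h | h
    · exact h (le_antisymm (by linarith) h1)
    · exact h (le_antisymm (by linarith) h2)

lemma pos_add {f g : MvPolynomial (Fin n) ℤ} (hf : IsPosPoly f) (hg : IsPosPoly g) :
    IsPosPoly (f + g) := by
  refine ⟨?_, fun d => by simpa [MvPolynomial.coeff_add] using add_nonneg (hf.2 d) (hg.2 d)⟩
  rw [← MvPolynomial.support_nonempty, pos_support_add hf hg]
  exact Finset.Nonempty.mono Finset.subset_union_left
    (MvPolynomial.support_nonempty.mpr hf.1)

lemma pos_mul {f g : MvPolynomial (Fin n) ℤ} (hf : IsPosPoly f) (hg : IsPosPoly g) :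
    IsPosPoly (f * g) := by
  refine ⟨mul_ne_zero hf.1 hg.1, fun d => ?_⟩
  rw [MvPolynomial.coeff_mul]
  exact Finset.sum_nonneg fun x _ => mul_nonneg (hf.2 x.1) (hg.2 x.2)

lemma trop_add (χ : Fin n → ℤ) {f g : MvPolynomial (Fin n) ℤ}
    (hf : IsPosPoly f) (hg : IsPosPoly g) :
    tropPoly (f + g) χ = max (tropPoly f χ) (tropPoly g χ) := by
  have hfg := pos_add hf hg
  rw [tropPoly_eq_sup' _ χ hfg.1, tropPoly_eq_sup' _ χ hf.1, tropPoly_eq_sup' _ χ hg.1]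
  rw [Finset.sup'_congr (support_nonempty.mpr hfg.1) (pos_support_add hf hg)
    (fun _ _ => rfl)]
  exact Finset.sup'_union (MvPolynomial.support_nonempty.mpr hf.1)
    (MvPolynomial.support_nonempty.mpr hg.1) (tdeg χ)

lemma trop_mul (χ : Fin n → ℤ) {f g : MvPolynomial (Fin n) ℤ}
    (hf : IsPosPoly f) (hg : IsPosPoly g) :
    tropPoly (f * g) χ = tropPoly f χ + tropPoly g χ := by
  have hfg := pos_mul hf hg
  apply le_antisymm
  · rw [tropPoly_eq_sup' _ χ hfg.1]
    apply Finset.sup'_le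
    intro d hd
    obtain ⟨a, ha, b, hb, rfl⟩ := Finset.mem_add.mp (MvPolynomial.support_mul f g hd)
    rw [tdeg_add]
    exact add_le_add (le_trop χ hf.1 ha) (le_trop χ hg.1 hb)
  · obtain ⟨a, ha, hae⟩ := Finset.exists_mem_eq_sup'
      (MvPolynomial.support_nonempty.mpr hf.1) (tdeg χ)
    obtain ⟨b, hb, hbe⟩ := Finset.exists_mem_eq_sup'
      (MvPolynomial.support_nonempty.mpr hg.1) (tdeg χ)
    have hmem : a + b ∈ (f * g).support := by
      rw [MvPolynomial.mem_support_iff, MvPolynomial.coeff_mul]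
      apply ne_of_gt
      apply Finset.sum_pos'
      · exact fun x _ => mul_nonneg (hf.2 x.1) (hg.2 x.2)
      · refine ⟨(a, b), Finset.HasAntidiagonal.mem_antidiagonal.mpr rfl, ?_⟩
        have h1 : 0 < f.coeff a := lt_of_le_of_ne (hf.2 a)
          (Ne.symm (MvPolynomial.mem_support_iff.mp ha))
        have h2 : 0 < g.coeff b := lt_of_le_of_ne (hg.2 b)
          (Ne.symm (MvPolynomial.mem_support_iff.mp hb))
        exact mul_pos h1 h2
    calc tropPoly f χ + tropPoly g χ
        = tdeg χ (a + b) := by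
          rw [tdeg_add, tropPoly_eq_sup' _ χ hf.1, tropPoly_eq_sup' _ χ hg.1, hae, hbe]
      _ ≤ tropPoly (f * g) χ := le_trop χ hfg.1 hmem

lemma pos_X (i : Fin n) : IsPosPoly (X i : MvPolynomial (Fin n) ℤ) := by
  refine ⟨MvPolynomial.X_ne_zero i, fun d => ?_⟩
  rw [MvPolynomial.coeff_X']
  split <;> norm_num

lemma trop_X (i : Fin n) (χ : Fin n → ℤ) : tropPoly (X i) χ = χ i := by
  unfold tropPoly
  rw [MvPolynomial.support_X, Finset.sup_singleton, WithBot.unbotD_coe]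
  rw [Finset.sum_eq_single i]
  · simp
  · intro j _ hj
    simp [Finsupp.single_apply, Ne.symm hj]
  · simp


variable {n : ℕ}
lemma pos_one : IsPosPoly (1 : MvPolynomial (Fin n) ℤ) := by
  refine ⟨one_ne_zero, fun d => ?_⟩
  rw [MvPolynomial.coeff_one]
  split <;> norm_num

lemma pos_C {c : ℤ} (hc : 0 < c) : IsPosPoly (C c : MvPolynomial (Fin n) ℤ) := by
  refine ⟨fun h => hc.ne' (by simpa using h), fun d => ?_⟩
  rw [MvPolynomial.coeff_C]
  split <;> [exact hc.le; rfl]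

lemma pos_monomial {c : ℤ} (hc : 0 < c) (d : Fin n →₀ ℕ) :
    IsPosPoly (monomial d c) := by
  refine ⟨by simpa [MvPolynomial.monomial_eq_zero] using hc.ne', fun e => ?_⟩
  rw [MvPolynomial.coeff_monomial]
  split <;> [exact hc.le; rfl]

lemma pos_X_pow (i : Fin n) (k : ℕ) : IsPosPoly (X i ^ k : MvPolynomial (Fin n) ℤ) := by
  induction k with
  | zero => simpa using pos_one
  | succ k ih => rw [pow_succ]; exact pos_mul ih (pos_X i)

section Phi
variable (Φ : MvPolynomial (Fin n) ℤ → ℤ)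
  (hadd : ∀ f g, IsPosPoly f → IsPosPoly g → Φ (f + g) = max (Φ f) (Φ g))
  (hmul : ∀ f g, IsPosPoly f → IsPosPoly g → Φ (f * g) = Φ f + Φ g)

include hmul in
lemma phi_one : Φ 1 = 0 := by
  have := hmul 1 1 pos_one pos_one
  rw [one_mul] at this; linarith

include hadd hmul in
lemma phi_C {c : ℤ} (hc : 0 < c) : Φ (C c) = 0 := by
  have hc' : (1:ℤ) ≤ c := by linarith
  refine Int.le_induction (motive := fun c _ => Φ (C c) = 0) ?_ ?_ c hc'
  · show Φ (C 1) = 0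
    rw [map_one]; exact phi_one Φ hmul
  · intro m hm ih
    show Φ (C (m+1)) = 0
    have ih : Φ (C m) = 0 := ih
    rw [map_add, map_one, hadd _ _ (pos_C (by linarith)) pos_one,
      ih, phi_one Φ hmul]
    simp

include hmul in
lemma phi_X_pow (i : Fin n) (k : ℕ) : Φ (X i ^ k) = k * Φ (X i) := by
  induction k with
  | zero => simpa using phi_one Φ hmul
  | succ k ih =>
      rw [pow_succ, hmul _ _ (pos_X_pow i k) (pos_X i), ih]
      push_cast; ring

include hmul in
lemma phi_prod {ι : Type*} [DecidableEq ι] (s : Finset ι)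
    (p : ι → MvPolynomial (Fin n) ℤ) (h : ∀ i ∈ s, IsPosPoly (p i)) :
    IsPosPoly (∏ i ∈ s, p i) ∧ Φ (∏ i ∈ s, p i) = ∑ i ∈ s, Φ (p i) := by
  induction s using Finset.induction_on with
  | empty => simpa using ⟨pos_one, phi_one Φ hmul⟩
  | @insert a s hx ih =>
      have ih' := ih fun i hi => h i (Finset.mem_insert_of_mem hi)
      have ha := h a (Finset.mem_insert_self a s)
      rw [Finset.prod_insert hx, Finset.sum_insert hx]
      exact ⟨pos_mul ha ih'.1, by rw [hmul _ _ ha ih'.1, ih'.2]⟩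

include hadd hmul in
lemma phi_monomial (d : Fin n →₀ ℕ) {c : ℤ} (hc : 0 < c) :
    Φ (monomial d c) = tdeg (fun i => Φ (X i)) d := by
  have hprodeq : (d.prod fun i e => (X i : MvPolynomial (Fin n) ℤ) ^ e) =
      ∏ i, X i ^ d i := Finsupp.prod_fintype d _ (fun i => pow_zero _)
  have hp := phi_prod Φ hmul Finset.univ (fun i => (X i : MvPolynomial (Fin n) ℤ) ^ d i)
    (fun i _ => pos_X_pow i (d i))
  rw [monomial_eq, hprodeq, hmul _ _ (pos_C hc) hp.1, phi_C Φ hadd hmul hc, hp.2,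
    zero_add]
  unfold tdeg
  exact Finset.sum_congr rfl fun i _ => phi_X_pow Φ hmul i (d i)

end Phi

variable {n : ℕ} in
lemma trop_monomial (χ : Fin n → ℤ) (d : Fin n →₀ ℕ) {c : ℤ} (hc : c ≠ 0) :
    tropPoly (monomial d c) χ = tdeg χ d := by
  unfold tropPoly
  rw [MvPolynomial.support_monomial, if_neg hc, Finset.sup_singleton, WithBot.unbotD_coe]
  rfl

variable {n : ℕ} in
lemma phi_eq (Φ : MvPolynomial (Fin n) ℤ → ℤ)
    (hadd : ∀ f g, IsPosPoly f → IsPosPoly g → Φ (f + g) = max (Φ f) (Φ g))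
    (hmul : ∀ f g, IsPosPoly f → IsPosPoly g → Φ (f * g) = Φ f + Φ g)
    (f : MvPolynomial (Fin n) ℤ) (hf : IsPosPoly f) :
    Φ f = tropPoly f (fun i => Φ (X i)) := by
  set χ := fun i => Φ (X i) with hχ
  have key : ∀ (s : Finset (Fin n →₀ ℕ)) (hs : s.Nonempty), s ⊆ f.support →
      IsPosPoly (∑ d ∈ s, monomial d (f.coeff d)) ∧
      Φ (∑ d ∈ s, monomial d (f.coeff d)) = s.sup' hs (tdeg χ) := by
    intro s hs
    induction hs using Finset.Nonempty.cons_induction with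
    | singleton a =>
        intro hsub
        have ha : 0 < f.coeff a := lt_of_le_of_ne (hf.2 a)
          (Ne.symm (MvPolynomial.mem_support_iff.mp (hsub (Finset.mem_singleton_self a))))
        rw [Finset.sum_singleton, Finset.sup'_singleton]
        exact ⟨pos_monomial ha a, phi_monomial Φ hadd hmul a ha⟩
    | cons a s h hs ih =>
        intro hsub
        have hsub' : s ⊆ f.support := fun x hx => hsub (Finset.mem_cons_of_mem hx)
        have ha : 0 < f.coeff a := lt_of_le_of_ne (hf.2 a)
          (Ne.symm (MvPolynomial.mem_support_iff.mp (hsub (Finset.mem_cons_self a s))))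
        obtain ⟨ihpos, ihval⟩ := ih hsub'
        rw [Finset.sum_cons, Finset.sup'_cons hs]
        refine ⟨pos_add (pos_monomial ha a) ihpos, ?_⟩
        rw [hadd _ _ (pos_monomial ha a) ihpos, ihval, phi_monomial Φ hadd hmul a ha]
  obtain ⟨-, hval⟩ := key f.support (MvPolynomial.support_nonempty.mpr hf.1)
    (le_refl _)
  rw [tropPoly_eq_sup' f χ hf.1, ← hval]
  congr 1
  conv_lhs => rw [f.as_sum]

end TropAux

open TropAux in
/-- `χ ↦ deg_z⟨·, χ⟩` is a bijection between the cocharacter lattice `ℤ^n` and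
semiring homomorphisms from the semifield of positive rational functions to
`ℤ^t = (ℤ, max, +)`; a homomorphism is determined by its restriction to positive
polynomials, where it must turn `+` into `max` and `×` into `+`. -/
theorem stmt_13 {n : ℕ} :
    -- each cocharacter gives a semiring homomorphism
    (∀ (χ : Fin n → ℤ) (f g : MvPolynomial (Fin n) ℤ), IsPosPoly f → IsPosPoly g →
      tropPoly (f + g) χ = max (tropPoly f χ) (tropPoly g χ) ∧
        tropPoly (f * g) χ = tropPoly f χ + tropPoly g χ) ∧
    -- injectivity
    (∀ χ χ' : Fin n → ℤ,
      (∀ f : MvPolynomial (Fin n) ℤ, IsPosPoly f → tropPoly f χ = tropPoly f χ') → χ = χ') ∧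
    -- surjectivity: every semiring homomorphism arises from a unique cocharacter
    (∀ Φ : MvPolynomial (Fin n) ℤ → ℤ,
      (∀ f g, IsPosPoly f → IsPosPoly g → Φ (f + g) = max (Φ f) (Φ g)) →
      (∀ f g, IsPosPoly f → IsPosPoly g → Φ (f * g) = Φ f + Φ g) →
      ∃! χ : Fin n → ℤ, ∀ f, IsPosPoly f → Φ f = tropPoly f χ) := by
  refine ⟨?_, ?_, ?_⟩
  · intro χ f g hf hg
    exact ⟨trop_add χ hf hg, trop_mul χ hf hg⟩
  · intro χ χ' h
    funext i
    have := h (MvPolynomial.X i) (pos_X i)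
    rwa [trop_X, trop_X] at this
  · intro Φ hadd hmul
    refine ⟨fun i => Φ (MvPolynomial.X i), fun f hf => phi_eq Φ hadd hmul f hf, ?_⟩
    intro χ' hχ'
    funext i
    have := hχ' (MvPolynomial.X i) (pos_X i)
    rw [trop_X] at this
    exact this.symm
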